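/- For β ∈ ℝ let X(β) = H · Z(β) · H, where H is the Hadamard matrix and Z(β) = diag(1, e^{iβ}). Then exactly one of the following three mutually exclusive cases holds: (i) cos β = 0, in which case each of the two rows of X(β) is proportional to an equatorial effect ⟨0| + e^{iψ}⟨1| for some ψ ∈ ℝ (green failure); (ii) sin β = 0, in which case each row of X(β) is proportional to a computational-basis effect ⟨0| or ⟨1| (red failure, disconnecting); (iii) sin β · cos β ≠ 0, in which case in each row of X(β) the two entries are nonzero and have distinct moduli, so the row is proportional neither to an equatorial effect nor to a basis effect (non-unitary, non-correctable failure). -/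

import Mathlib

open Complex

/-- The phase gate `Z(β) = diag(1, e^{iβ})`. -/
noncomputable def Zrot (β : ℝ) : Matrix (Fin 2) (Fin 2) ℂ :=
  !![1, 0; 0, Complex.exp (β * Complex.I)]

/-- The Hadamard matrix `H = (1/√2)·[[1,1],[1,−1]]`. -/
noncomputable def Hmat : Matrix (Fin 2) (Fin 2) ℂ :=
  ((Real.sqrt 2 : ℂ))⁻¹ • !![1, 1; 1, -1]

/-- `X(β) = H · Z(β) · H`. -/
noncomputable def Xrot (β : ℝ) : Matrix (Fin 2) (Fin 2) ℂ := Hmat * Zrot β * Hmat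

/-- An equatorial (green) effect: a functional on `ℂ²` proportional to
`⟨0| + e^{iψ}⟨1|` for some `ψ ∈ ℝ`. -/
def IsEquatorialEffect (r : Fin 2 → ℂ) : Prop :=
  ∃ (c : ℂ) (ψ : ℝ), c ≠ 0 ∧ r 0 = c ∧ r 1 = c * Complex.exp (ψ * Complex.I)

/-- A computational-basis (red) effect: a functional on `ℂ²` proportional to
`⟨0|` or to `⟨1|`. -/
def IsBasisEffect (r : Fin 2 → ℂ) : Prop :=
  (∃ c : ℂ, c ≠ 0 ∧ r 0 = c ∧ r 1 = 0) ∨ (∃ c : ℂ, c ≠ 0 ∧ r 0 = 0 ∧ r 1 = c)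

lemma sqrt2_inv_mul : ((Real.sqrt 2 : ℝ) : ℂ)⁻¹ * ((Real.sqrt 2 : ℝ) : ℂ)⁻¹ = 2⁻¹ := by
  rw [← mul_inv]
  norm_cast
  rw [Real.mul_self_sqrt (by norm_num)]
  norm_num

lemma Xrot_eq (β : ℝ) : Xrot β =
    !![(1 + Complex.exp (β * Complex.I)) / 2, (1 - Complex.exp (β * Complex.I)) / 2;
       (1 - Complex.exp (β * Complex.I)) / 2, (1 + Complex.exp (β * Complex.I)) / 2] := by
  ext i j
  fin_cases i <;> fin_cases j <;>
    simp [Xrot, Hmat, Zrot, Matrix.mul_apply, Fin.sum_univ_two] <;>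
  [ linear_combination (1 + Complex.exp (β * Complex.I)) * sqrt2_inv_mul;
    linear_combination (1 - Complex.exp (β * Complex.I)) * sqrt2_inv_mul;
    linear_combination (1 - Complex.exp (β * Complex.I)) * sqrt2_inv_mul;
    linear_combination (1 + Complex.exp (β * Complex.I)) * sqrt2_inv_mul]

lemma exists_phase {a b : ℂ} (ha : a ≠ 0) (hab : ‖a‖ = ‖b‖) :
    ∃ ψ : ℝ, b = a * Complex.exp (ψ * Complex.I) := by
  refine ⟨(b / a).arg, ?_⟩
  have h1 : ‖b / a‖ = 1 := by
    rw [norm_div, ← hab, div_self (by simpa using ha)]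
  have h := Complex.norm_mul_exp_arg_mul_I (b / a)
  rw [h1] at h
  simp only [ofReal_one, one_mul] at h
  rw [h, mul_div_cancel₀ _ ha]

/-- Trichotomy for the failure behaviour of the fusion determined by `X(β) = H Z(β) H`:
(i) if `cos β = 0` each row of `X(β)` is an equatorial effect (green failure);
(ii) if `sin β = 0` each row is a computational-basis effect (red, disconnecting failure);
(iii) if `sin β · cos β ≠ 0` each row has two nonzero entries of distinct moduli, hence is
proportional neither to an equatorial effect nor to a basis effect (non-unitary,
non-correctable failure).  The three case assumptions are mutually exclusive and
exhaustive. -/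
theorem fusion_failure_trichotomy (β : ℝ) :
    (Real.cos β = 0 → ∀ i : Fin 2, IsEquatorialEffect (Xrot β i)) ∧
    (Real.sin β = 0 → ∀ i : Fin 2, IsBasisEffect (Xrot β i)) ∧
    (Real.sin β * Real.cos β ≠ 0 → ∀ i : Fin 2,
      (Xrot β i 0 ≠ 0 ∧ Xrot β i 1 ≠ 0 ∧
        ‖Xrot β i 0‖ ≠ ‖Xrot β i 1‖) ∧
      ¬ IsEquatorialEffect (Xrot β i) ∧ ¬ IsBasisEffect (Xrot β i)) := by
  set e : ℂ := Complex.exp (β * Complex.I) with he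
  have hre : e.re = Real.cos β := by rw [he]; exact Complex.exp_ofReal_mul_I_re β
  have him : e.im = Real.sin β := by rw [he]; exact Complex.exp_ofReal_mul_I_im β
  have hX : ∀ i : Fin 2, (Xrot β i 0 = (1 + e) / 2 ∧ Xrot β i 1 = (1 - e) / 2) ∨
      (Xrot β i 0 = (1 - e) / 2 ∧ Xrot β i 1 = (1 + e) / 2) := by
    intro i
    fin_cases i
    · left; rw [Xrot_eq]; exact ⟨rfl, rfl⟩
    · right; rw [Xrot_eq]; exact ⟨rfl, rfl⟩
  have hnp : Complex.normSq (1 + e) = 2 + 2 * Real.cos β := by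
    rw [Complex.normSq_apply]
    simp only [Complex.add_re, Complex.add_im, Complex.one_re, Complex.one_im, hre, him]
    have := Real.sin_sq_add_cos_sq β
    nlinarith
  have hnm : Complex.normSq (1 - e) = 2 - 2 * Real.cos β := by
    rw [Complex.normSq_apply]
    simp only [Complex.sub_re, Complex.sub_im, Complex.one_re, Complex.one_im, hre, him]
    have := Real.sin_sq_add_cos_sq β
    nlinarith
  have hne : ∀ {x : ℂ} {r : ℝ}, Complex.normSq x = r → r ≠ 0 → x ≠ 0 := by
    intro x r h hr hx
    rw [hx, map_zero] at h
    exact hr h.symm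
  refine ⟨?_, ?_, ?_⟩
  · -- (i) cos β = 0 : equatorial
    intro hc i
    have hp0 : (1 + e) ≠ 0 := hne hnp (by rw [hc]; norm_num)
    have hm0 : (1 - e) ≠ 0 := hne hnm (by rw [hc]; norm_num)
    have habs : ‖1 + e‖ = ‖1 - e‖ := by
      rw [Complex.norm_def, Complex.norm_def, hnp, hnm, hc]
      ring_nf
    rcases hX i with ⟨h0, h1⟩ | ⟨h0, h1⟩
    · obtain ⟨ψ, hψ⟩ := exists_phase (a := (1 + e) / 2) (b := (1 - e) / 2)
        (div_ne_zero hp0 two_ne_zero) (by rw [norm_div, norm_div, habs])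
      exact ⟨(1 + e) / 2, ψ, div_ne_zero hp0 two_ne_zero, h0, by rw [h1, hψ]⟩
    · obtain ⟨ψ, hψ⟩ := exists_phase (a := (1 - e) / 2) (b := (1 + e) / 2)
        (div_ne_zero hm0 two_ne_zero) (by rw [norm_div, norm_div, habs])
      exact ⟨(1 - e) / 2, ψ, div_ne_zero hm0 two_ne_zero, h0, by rw [h1, hψ]⟩
  · -- (ii) sin β = 0 : basis
    intro hs i
    have hcc : (Real.cos β - 1) * (Real.cos β + 1) = 0 := by
      have := Real.sin_sq_add_cos_sq β
      nlinarith
    rcases mul_eq_zero.mp hcc with h | h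
    · -- cos β = 1, e = 1
      have he1 : e = 1 := by
        apply Complex.ext
        · rw [hre]; rw [Complex.one_re]; linarith
        · rw [him, hs]; simp
      rcases hX i with ⟨h0, h1⟩ | ⟨h0, h1⟩
      · exact Or.inl ⟨1, one_ne_zero, by rw [h0, he1]; norm_num, by rw [h1, he1]; norm_num⟩
      · exact Or.inr ⟨1, one_ne_zero, by rw [h0, he1]; norm_num, by rw [h1, he1]; norm_num⟩
    · -- cos β = -1, e = -1
      have he1 : e = -1 := by
        apply Complex.ext
        · rw [hre]; simp; linarith
        · rw [him, hs]; simp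
      rcases hX i with ⟨h0, h1⟩ | ⟨h0, h1⟩
      · exact Or.inr ⟨1, one_ne_zero, by rw [h0, he1]; norm_num, by rw [h1, he1]; norm_num⟩
      · exact Or.inl ⟨1, one_ne_zero, by rw [h0, he1]; norm_num, by rw [h1, he1]; norm_num⟩
  · -- (iii) sin β · cos β ≠ 0
    intro hsc i
    have hs : Real.sin β ≠ 0 := fun h => hsc (by rw [h, zero_mul])
    have hc : Real.cos β ≠ 0 := fun h => hsc (by rw [h, mul_zero])
    have hlt : Real.cos β ^ 2 < 1 := by
      have := Real.sin_sq_add_cos_sq β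
      have : Real.sin β ^ 2 > 0 := by positivity
      nlinarith [Real.sin_sq_add_cos_sq β]
    have hp0 : (1 + e) ≠ 0 := hne hnp (by nlinarith)
    have hm0 : (1 - e) ≠ 0 := hne hnm (by nlinarith)
    have habsne : ‖(1 + e) / 2‖ ≠ ‖(1 - e) / 2‖ := by
      intro h
      have h2 : ‖1 + e‖ = ‖1 - e‖ := by
        rw [norm_div, norm_div] at h
        have : (‖(2 : ℂ)‖ : ℝ) ≠ 0 := by simp
        field_simp at h
        exact h
      have h3 : Complex.normSq (1 + e) = Complex.normSq (1 - e) := by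
        rw [← Complex.sq_norm, ← Complex.sq_norm, h2]
      rw [hnp, hnm] at h3
      apply hc
      linarith
    have key : Xrot β i 0 ≠ 0 ∧ Xrot β i 1 ≠ 0 ∧
        ‖Xrot β i 0‖ ≠ ‖Xrot β i 1‖ := by
      rcases hX i with ⟨h0, h1⟩ | ⟨h0, h1⟩
      · exact ⟨by rw [h0]; exact div_ne_zero hp0 two_ne_zero,
          by rw [h1]; exact div_ne_zero hm0 two_ne_zero, by rw [h0, h1]; exact habsne⟩
      · exact ⟨by rw [h0]; exact div_ne_zero hm0 two_ne_zero,
          by rw [h1]; exact div_ne_zero hp0 two_ne_zero, by rw [h0, h1]; exact habsne.symm⟩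
    refine ⟨key, ?_, ?_⟩
    · rintro ⟨c, ψ, hc0, h0, h1⟩
      apply key.2.2
      rw [h0, h1, norm_mul, Complex.norm_exp_ofReal_mul_I, mul_one]
    · rintro (⟨c, hc0, h0, h1⟩ | ⟨c, hc0, h0, h1⟩)
      · exact key.2.1 h1
      · exact key.1 h0
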